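/- Let WN = (P,T,F,i,o) be a sound acyclic free-choice workflow net (AFW-net). For every pair (x,y) ∈ ∥ and every node s ∈ y•: there is no acyclic path from x to s if and only if (x,s) ∈ ∥. -/

import Mathlib

/-- A Petri net: finite disjoint sets of places and transitions and a flow relation
`F ⊆ (P × T) ∪ (T × P)`. -/
structure PetriNet (α : Type) [DecidableEq α] where
  places : Finset α
  transitions : Finset α
  flow : Finset (α × α)
  disjoint_pt : Disjoint places transitions
  flow_mem : ∀ e ∈ flow,
    (e.1 ∈ places ∧ e.2 ∈ transitions) ∨ (e.1 ∈ transitions ∧ e.2 ∈ places)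

namespace PetriNet

variable {α : Type} [DecidableEq α]

/-- All nodes `P ∪ T` of the net. -/
def nodes (N : PetriNet α) : Finset α := N.places ∪ N.transitions

/-- The preset `•x` of a node. -/
def preset (N : PetriNet α) (x : α) : Finset α :=
  N.nodes.filter (fun p => (p, x) ∈ N.flow)

/-- The postset `x•` of a node. -/
def postset (N : PetriNet α) (x : α) : Finset α :=
  N.nodes.filter (fun s => (x, s) ∈ N.flow)

/-- A path: a nonempty sequence of nodes, each consecutive pair related by the flow. -/
def IsPath (N : PetriNet α) (w : List α) : Prop :=
  w ≠ [] ∧ (∀ x ∈ w, x ∈ N.nodes) ∧ w.Chain' (fun a b => (a, b) ∈ N.flow)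

/-- An acyclic path: a path whose nodes are pairwise distinct. -/
def IsAcyclicPath (N : PetriNet α) (w : List α) : Prop :=
  N.IsPath w ∧ w.Nodup

/-- There is an acyclic path from `x` to `y`. -/
def HasAcyclicPath (N : PetriNet α) (x y : α) : Prop :=
  ∃ w, N.IsAcyclicPath w ∧ w.head? = some x ∧ w.getLast? = some y

/-- `HasPath(x)`: the set of all nodes to which `x` has an acyclic path
(including `x` itself, via the trivial path `(x)` when `x` is a node). -/
def HasPathSet (N : PetriNet α) (x : α) : Set α := {y | N.HasAcyclicPath x y}

/-- A net is acyclic iff no node has a nontrivial path to itself. -/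
def Acyclic (N : PetriNet α) : Prop :=
  ∀ x, ¬ ∃ w, N.IsPath w ∧ 2 ≤ w.length ∧ w.head? = some x ∧ w.getLast? = some x

/-- A transition `t` is enabled in marking `M` iff all its input places carry a token. -/
def Enabled (N : PetriNet α) (M : α → ℕ) (t : α) : Prop :=
  t ∈ N.transitions ∧ ∀ p ∈ N.preset t, 1 ≤ M p

/-- Firing `t` consumes one token from each input place and produces one on each output place. -/
def fire (N : PetriNet α) (M : α → ℕ) (t : α) : α → ℕ := fun p =>
  (M p - (if p ∈ N.preset t then 1 else 0)) + (if p ∈ N.postset t then 1 else 0)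

/-- A step `M —t→ M'`. -/
def Step (N : PetriNet α) (M : α → ℕ) (t : α) (M' : α → ℕ) : Prop :=
  N.Enabled M t ∧ M' = N.fire M t

/-- Reachability via finite occurrence sequences. -/
def Reachable (N : PetriNet α) : (α → ℕ) → (α → ℕ) → Prop :=
  Relation.ReflTransGen (fun M M' => ∃ t, N.Step M t M')

/-- Liveness with respect to an initial marking. -/
def Live (N : PetriNet α) (M₀ : α → ℕ) : Prop :=
  ∀ M, N.Reachable M₀ M → ∀ t ∈ N.transitions, ∃ M', N.Reachable M M' ∧ N.Enabled M' t

/-- Boundedness with respect to an initial marking. -/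
def Bounded (N : PetriNet α) (M₀ : α → ℕ) : Prop :=
  ∃ n : ℕ, ∀ M, N.Reachable M₀ M → ∀ p ∈ N.places, M p ≤ n

/-- Free-choice: every place with more than one output transition is the unique
input of each of those transitions. -/
def FreeChoice (N : PetriNet α) : Prop :=
  ∀ p ∈ N.places, 1 < (N.postset p).card → ∀ t ∈ N.postset p, N.preset t = {p}

/-- A node is active in `M` iff it is a place carrying a token or an enabled transition. -/
def Active (N : PetriNet α) (x : α) (M : α → ℕ) : Prop :=
  (x ∈ N.places ∧ 1 ≤ M x) ∨ (x ∈ N.transitions ∧ N.Enabled M x)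

/-- One unfolding of the defining clauses of the concurrency relation. -/
def concStep (N : PetriNet α) (M₀ : α → ℕ) (R : Set (α × α)) : Set (α × α) :=
  {q | q.1 ≠ q.2 ∧
    (∃ M, N.Reachable M₀ M ∧ N.Active q.1 M ∧ N.Active q.2 M) ∧
    (q.1 ∈ N.transitions → q.2 ∈ N.places → ∀ z ∈ N.preset q.1, (z, q.2) ∈ R) ∧
    (q.1 ∈ N.places → q.2 ∈ N.transitions → ∀ z ∈ N.preset q.2, (z, q.1) ∈ R) ∧
    (q.1 ∈ N.transitions → q.2 ∈ N.transitions →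
      ∀ z ∈ N.preset q.1, ∀ z' ∈ N.preset q.2, (z, z') ∈ R)}

/-- The concurrency relation `∥`: the greatest relation consistent with its
defining clauses (Def. of concurrency). -/
def Concurrent (N : PetriNet α) (M₀ : α → ℕ) : Set (α × α) :=
  ⋃₀ {R | R ⊆ N.concStep M₀ R}

/-- The number of places on `w` carrying at least one token in `M`. -/
def tokensOn (N : PetriNet α) (M : α → ℕ) (w : List α) : ℕ :=
  (w.toFinset.filter (fun p => p ∈ N.places ∧ 1 ≤ M p)).card

end PetriNet

/-- A workflow net: a Petri net with a source place `i` (`•i = ∅`), a sink place `o`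
(`o• = ∅`), and every node on a path from `i` to `o`. -/
structure WorkflowNet (α : Type) [DecidableEq α] extends PetriNet α where
  source : α
  sink : α
  source_mem : source ∈ places
  sink_mem : sink ∈ places
  source_no_pre : toPetriNet.preset source = ∅
  sink_no_post : toPetriNet.postset sink = ∅
  all_on_path : ∀ x ∈ toPetriNet.nodes, ∃ w, toPetriNet.IsPath w ∧
    w.head? = some source ∧ w.getLast? = some sink ∧ x ∈ w

namespace WorkflowNet

variable {α : Type} [DecidableEq α]

/-- The initial marking: one token on the source, none elsewhere. -/
def initialMarking (W : WorkflowNet α) : α → ℕ := fun p => if p = W.source then 1 else 0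

/-- The terminal marking: one token on the sink, none elsewhere. -/
def terminalMarking (W : WorkflowNet α) : α → ℕ := fun p => if p = W.sink then 1 else 0

/-- Soundness of a workflow net. -/
def Sound (W : WorkflowNet α) : Prop :=
  (∀ M, W.toPetriNet.Reachable W.initialMarking M →
    W.toPetriNet.Reachable M W.terminalMarking ∧ (1 ≤ M W.sink → M = W.terminalMarking)) ∧
  (∀ t ∈ W.transitions, ∃ M M', W.toPetriNet.Reachable W.initialMarking M ∧
    W.toPetriNet.Step M t M')

end WorkflowNet

/-! ### Auxiliary development -/

section Aux
open Classical

variable {α : Type} [DecidableEq α]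

namespace PetriNet

variable (N : PetriNet α)

/-- Graph reachability along the flow relation. -/
def reaches (a b : α) : Prop := Relation.ReflTransGen (fun u v => (u, v) ∈ N.flow) a b

variable {N}

lemma not_place_trans {a : α} (h1 : a ∈ N.places) (h2 : a ∈ N.transitions) : False :=
  Finset.disjoint_left.mp N.disjoint_pt h1 h2

lemma mem_nodes_left {a b : α} (h : (a, b) ∈ N.flow) : a ∈ N.nodes := by
  rcases N.flow_mem _ h with ⟨h1, _⟩ | ⟨h1, _⟩ <;> simp [nodes, h1]

lemma mem_nodes_right {a b : α} (h : (a, b) ∈ N.flow) : b ∈ N.nodes := by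
  rcases N.flow_mem _ h with ⟨_, h2⟩ | ⟨_, h2⟩ <;> simp [nodes, h2]

lemma trans_of_flow_place {a b : α} (h : (a, b) ∈ N.flow) (ha : a ∈ N.places) :
    b ∈ N.transitions := by
  rcases N.flow_mem _ h with ⟨_, h2⟩ | ⟨h1, _⟩
  · exact h2
  · exact absurd ha (fun q => not_place_trans q h1)

lemma place_of_flow_trans {a b : α} (h : (a, b) ∈ N.flow) (ha : a ∈ N.transitions) :
    b ∈ N.places := by
  rcases N.flow_mem _ h with ⟨h1, _⟩ | ⟨_, h2⟩
  · exact absurd h1 (fun q => not_place_trans q ha)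
  · exact h2

lemma place_of_flow_into_trans {a b : α} (h : (a, b) ∈ N.flow) (hb : b ∈ N.transitions) :
    a ∈ N.places := by
  rcases N.flow_mem _ h with ⟨h1, _⟩ | ⟨_, h2⟩
  · exact h1
  · exact absurd h2 (fun q => not_place_trans q hb)

lemma mem_preset_iff {z x : α} : z ∈ N.preset x ↔ z ∈ N.nodes ∧ (z, x) ∈ N.flow := by
  simp [preset]

lemma mem_postset_iff {z x : α} : z ∈ N.postset x ↔ z ∈ N.nodes ∧ (x, z) ∈ N.flow := by
  simp [postset]

lemma mem_preset_of_flow {z x : α} (h : (z, x) ∈ N.flow) : z ∈ N.preset x :=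
  mem_preset_iff.mpr ⟨mem_nodes_left h, h⟩

lemma mem_postset_of_flow {x z : α} (h : (x, z) ∈ N.flow) : z ∈ N.postset x :=
  mem_postset_iff.mpr ⟨mem_nodes_right h, h⟩

lemma flow_of_mem_preset {z x : α} (h : z ∈ N.preset x) : (z, x) ∈ N.flow :=
  (mem_preset_iff.mp h).2

lemma flow_of_mem_postset {z x : α} (h : z ∈ N.postset x) : (x, z) ∈ N.flow :=
  (mem_postset_iff.mp h).2

lemma reaches_of_flow {a b : α} (h : (a, b) ∈ N.flow) : N.reaches a b :=
  Relation.ReflTransGen.single h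

lemma reaches_trans {a b c : α} (h1 : N.reaches a b) (h2 : N.reaches b c) : N.reaches a c :=
  Relation.ReflTransGen.trans h1 h2

/-- From graph reachability we can produce an honest path list. -/
lemma exists_isPath_of_reaches {a b : α} (h : N.reaches a b) (ha : a ∈ N.nodes) :
    ∃ w, N.IsPath w ∧ w.head? = some a ∧ w.getLast? = some b := by
  induction h using Relation.ReflTransGen.head_induction_on with
  | refl => exact ⟨[b], ⟨by simp, by simpa using ha, List.isChain_singleton _⟩, by simp, by simp⟩
  | head hab _ ih =>
    rename_i a' c _
    obtain ⟨w, ⟨hne, hmem, hch⟩, hh, hl⟩ := ih (mem_nodes_right hab)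
    cases w with
    | nil => simp at hh
    | cons d w' =>
      have hd : d = c := by simpa using hh
      refine ⟨a' :: d :: w', ⟨by simp, ?_, ?_⟩, by simp, by simpa using hl⟩
      · intro x hx
        rcases List.mem_cons.mp hx with rfl | hx
        · exact mem_nodes_left hab
        · exact hmem _ hx
      · exact List.isChain_cons_cons.mpr ⟨hd ▸ hab, hch⟩

lemma reaches_of_isPath {w : List α} (hw : N.IsPath w) {a b : α}
    (hh : w.head? = some a) (hl : w.getLast? = some b) : N.reaches a b := by
  induction w generalizing a with
  | nil => simp at hh
  | cons c w' ih =>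
    have hc : c = a := by simpa using hh
    subst hc
    cases w' with
    | nil =>
      have : c = b := by simpa using hl
      exact this ▸ Relation.ReflTransGen.refl
    | cons d w'' =>
      obtain ⟨hne, hmem, hch⟩ := hw
      have hch' := List.isChain_cons_cons.mp hch
      refine Relation.ReflTransGen.head hch'.1 (ih ⟨by simp, ?_, hch'.2⟩ (by simp) ?_)
      · intro x hx; exact hmem x (List.mem_cons_of_mem _ hx)
      · simpa using hl

lemma reaches_of_hasAcyclicPath {a b : α} (h : N.HasAcyclicPath a b) : N.reaches a b := by
  obtain ⟨w, ⟨hw, _⟩, hh, hl⟩ := h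
  exact reaches_of_isPath hw hh hl

lemma hasAcyclicPath_refl {a : α} (ha : a ∈ N.nodes) : N.HasAcyclicPath a a :=
  ⟨[a], ⟨⟨by simp, by simpa using ha, List.isChain_singleton _⟩, by simp⟩, by simp, by simp⟩

lemma nodes_of_hasAcyclicPath {a b : α} (h : N.HasAcyclicPath a b) : a ∈ N.nodes := by
  obtain ⟨w, ⟨⟨hne, hmem, _⟩, _⟩, hh, _⟩ := h
  cases w with
  | nil => simp at hh
  | cons c w' =>
    have : c = a := by simpa using hh
    exact this ▸ hmem c (by simp)

end PetriNet

end Aux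

section Aux2
open Classical

variable {α : Type} [DecidableEq α]

namespace PetriNet

variable {N : PetriNet α}

/-- In an acyclic net there is no flow edge closing a cycle. -/
lemma no_flow_cycle (hacyc : N.Acyclic) {a b : α} (hab : (a, b) ∈ N.flow)
    (hba : N.reaches b a) : False := by
  obtain ⟨w, hw, hh, hl⟩ := exists_isPath_of_reaches hba (mem_nodes_right hab)
  cases w with
  | nil => simp at hh
  | cons c w' =>
    have hc : c = b := by simpa using hh
    refine hacyc a ⟨a :: c :: w', ⟨by simp, ?_, ?_⟩, by simp, by simp, by simpa using hl⟩
    · intro x hx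
      rcases List.mem_cons.mp hx with rfl | hx
      · exact mem_nodes_left hab
      · exact hw.2.1 x hx
    · exact List.isChain_cons_cons.mpr ⟨hc ▸ hab, hw.2.2⟩

lemma reaches_antisymm (hacyc : N.Acyclic) {a b : α} (h1 : N.reaches a b)
    (h2 : N.reaches b a) : a = b := by
  rcases Relation.ReflTransGen.cases_head h1 with rfl | ⟨c, hac, hcb⟩
  · rfl
  · exact absurd (reaches_trans hcb h2) (fun q => no_flow_cycle hacyc hac q)

lemma not_reaches_pre (hacyc : N.Acyclic) {z x : α} (h : (z, x) ∈ N.flow) :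
    ¬ N.reaches x z := fun q => no_flow_cycle hacyc h q

/-- Any reachability witness can be turned into an acyclic path. -/
lemma hasAcyclicPath_of_reaches {a b : α} (h : N.reaches a b) (ha : a ∈ N.nodes) :
    N.HasAcyclicPath a b := by
  induction h using Relation.ReflTransGen.head_induction_on with
  | refl => exact hasAcyclicPath_refl ha
  | head hab _ ih =>
    rename_i a' c _
    obtain ⟨w, ⟨⟨hne, hmem, hch⟩, hnd⟩, hh, hl⟩ := ih (mem_nodes_right hab)
    by_cases hmem' : a' ∈ w
    · obtain ⟨w1, w2, rfl⟩ := List.append_of_mem hmem'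
      refine ⟨a' :: w2, ⟨⟨by simp, ?_, ?_⟩, ?_⟩, by simp, ?_⟩
      · intro x hx
        refine hmem x ?_
        simp only [List.mem_append, List.mem_cons]
        rcases List.mem_cons.mp hx with rfl | hx
        · exact Or.inr (Or.inl rfl)
        · exact Or.inr (Or.inr hx)
      · exact hch.suffix ⟨w1, rfl⟩
      · exact hnd.sublist (List.sublist_append_right _ _)
      · rw [List.getLast?_append_of_ne_nil (l₁ := w1) (by simp)] at hl
        exact hl
    · cases w with
      | nil => simp at hh
      | cons d w' =>
        have hd : d = c := by simpa using hh
        refine ⟨a' :: d :: w', ⟨⟨by simp, ?_, List.isChain_cons_cons.mpr ⟨hd ▸ hab, hch⟩⟩, ?_⟩,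
          by simp, by simpa using hl⟩
        · intro x hx
          rcases List.mem_cons.mp hx with rfl | hx
          · exact mem_nodes_left hab
          · exact hmem x hx
        · exact List.nodup_cons.mpr ⟨hmem', hnd⟩

end PetriNet

end Aux2
section Aux3
open Classical

variable {α : Type} [DecidableEq α]

namespace PetriNet

variable {N : PetriNet α}

/-- Explicit firing sequences. -/
inductive FireSeq (N : PetriNet α) : (α → ℕ) → List α → (α → ℕ) → Prop
  | nil (M : α → ℕ) : FireSeq N M [] M
  | cons {M M' M'' : α → ℕ} {t : α} {σ : List α} :
      N.Step M t M' → FireSeq N M' σ M'' → FireSeq N M (t :: σ) M''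

lemma FireSeq.append_single {M M' M'' : α → ℕ} {σ : List α} {t : α}
    (h : N.FireSeq M σ M') (h2 : N.Step M' t M'') : N.FireSeq M (σ ++ [t]) M'' := by
  induction h with
  | nil => exact FireSeq.cons h2 (FireSeq.nil _)
  | cons hs _ ih => exact FireSeq.cons hs (ih h2)

lemma fireSeq_of_reachable {M M' : α → ℕ} (h : N.Reachable M M') :
    ∃ σ, N.FireSeq M σ M' := by
  induction h with
  | refl => exact ⟨[], FireSeq.nil _⟩
  | tail _ hstep ih =>
    obtain ⟨t, hstep⟩ := hstep
    obtain ⟨σ, hσ⟩ := ih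
    exact ⟨σ ++ [t], hσ.append_single hstep⟩

lemma reachable_of_fireSeq {M M' : α → ℕ} {σ : List α} (h : N.FireSeq M σ M') :
    N.Reachable M M' := by
  induction h with
  | nil => exact Relation.ReflTransGen.refl
  | cons hs _ ih => exact Relation.ReflTransGen.head ⟨_, hs⟩ ih

lemma fireSeq_append_split {M M' : α → ℕ} {σa σb : List α}
    (h : N.FireSeq M (σa ++ σb) M') : ∃ Mm, N.FireSeq M σa Mm ∧ N.FireSeq Mm σb M' := by
  induction σa generalizing M with
  | nil => exact ⟨M, FireSeq.nil _, h⟩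
  | cons t σa' ih =>
    rcases h with _ | ⟨hs, h'⟩
    obtain ⟨Mm, h1, h2⟩ := ih h'
    exact ⟨Mm, FireSeq.cons hs h1, h2⟩

/-- Firing a transition changes only places (when the marking is supported on places,
this is preserved). -/
lemma fire_support {M : α → ℕ} {t p : α} (ht : t ∈ N.transitions)
    (hp : p ∉ N.places) : N.fire M t p = M p := by
  have h1 : p ∉ N.preset t := by
    intro hq; exact hp (place_of_flow_into_trans (flow_of_mem_preset hq) ht)
  have h2 : p ∉ N.postset t := by
    intro hq; exact hp (place_of_flow_trans (flow_of_mem_postset hq) ht)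
  simp [fire, h1, h2]

lemma reachable_support {M M' : α → ℕ} (h : N.Reachable M M')
    (hM : ∀ p, p ∉ N.places → M p = 0) : ∀ p, p ∉ N.places → M' p = 0 := by
  induction h with
  | refl => exact hM
  | tail _ hstep ih =>
    obtain ⟨t, ⟨hen, rfl⟩⟩ := hstep
    intro p hp
    rw [fire_support hen.1 hp]
    exact ih p hp

/-- A marked node in a reachable marking is a place. -/
lemma marked_mem_places {M M' : α → ℕ} (h : N.Reachable M M')
    (hM : ∀ p, p ∉ N.places → M p = 0) {p : α} (hp : 1 ≤ M' p) : p ∈ N.places := by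
  by_contra hq
  rw [reachable_support h hM p hq] at hp
  omega

/-- If a place loses tokens along a run, some transition in the run consumes it;
split at the first such transition. -/
lemma exists_first_consumer {M M' : α → ℕ} {σ : List α} {q : α}
    (h : N.FireSeq M σ M') (hlt : M' q < M q) :
    ∃ σa t σb, σ = σa ++ t :: σb ∧ (∀ u ∈ σa, q ∉ N.preset u) ∧ q ∈ N.preset t := by
  induction h with
  | nil => omega
  | @cons M₀ M₁ M₂ t σ' hs _ ih =>
    by_cases hq : q ∈ N.preset t
    · exact ⟨[], t, σ', by simp, by simp, hq⟩
    · have hge : M₀ q ≤ M₁ q := by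
        rcases hs with ⟨hen, rfl⟩
        simp only [fire, hq, if_neg, if_false]
        split <;> omega
      obtain ⟨σa, u, σb, rfl, h1, h2⟩ := ih (by omega)
      exact ⟨t :: σa, u, σb, by simp, by
        intro v hv
        rcases List.mem_cons.mp hv with rfl | hv
        · exact hq
        · exact h1 v hv, h2⟩

/-- Along a run without consumers of `q`, the token count of `q` does not decrease. -/
lemma no_consumer_mono {M M' : α → ℕ} {σ : List α} {q : α}
    (h : N.FireSeq M σ M') (hq : ∀ u ∈ σ, q ∉ N.preset u) : M q ≤ M' q := by
  induction h with
  | nil => exact le_refl _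
  | @cons M₀ M₁ M₂ t σ' hs _ ih =>
    have h1 : M₀ q ≤ M₁ q := by
      rcases hs with ⟨hen, rfl⟩
      have : q ∉ N.preset t := hq t (by simp)
      simp only [fire, this, if_neg, if_false]
      split <;> omega
    have h2 := ih (fun u hu => hq u (List.mem_cons_of_mem _ hu))
    omega

end PetriNet

end Aux3
section Aux4
open Classical

variable {α : Type} [DecidableEq α]

namespace PetriNet

variable {N : PetriNet α}

/-- The surgery lemma: dropping from a firing sequence every transition reachable from a
pivot `x` yields a sequence fireable from any marking that dominates the original one
(with offsets `c`) on the places not reachable from `x`.  Moreover the token count on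
`x` itself never decreases along the filtered run. -/
lemma surgery {x : α} {σ : List α} {M Mf : α → ℕ} (h : N.FireSeq M σ Mf) :
    ∀ (M' c : α → ℕ), (∀ p, ¬ N.reaches x p → M p + c p ≤ M' p) →
    ∃ Mf', N.FireSeq M' (σ.filter fun u => decide (¬ N.reaches x u)) Mf' ∧
      (∀ p, ¬ N.reaches x p → Mf p + c p ≤ Mf' p) ∧ M' x ≤ Mf' x := by
  induction h with
  | nil M₀ =>
    intro M' c hinv
    exact ⟨M', by simpa using FireSeq.nil (N := N) M', hinv, le_refl _⟩
  | @cons M₀ M₁ M₂ t σ' hs hrest ih =>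
    intro M' c hinv
    obtain ⟨hen, rfl⟩ := hs
    by_cases hkeep : N.reaches x t
    · -- `t` is dropped
      have hnew : ∀ p, ¬ N.reaches x p → N.fire M₀ t p + c p ≤ M' p := by
        intro p hp
        have hpost : p ∉ N.postset t := fun hq =>
          hp (reaches_trans hkeep (reaches_of_flow (flow_of_mem_postset hq)))
        have := hinv p hp
        simp only [fire, hpost, if_neg, if_false]
        split <;> omega
      obtain ⟨Mf', h1, h2, h3⟩ := ih M' c hnew
      refine ⟨Mf', ?_, h2, h3⟩
      simpa [List.filter_cons, hkeep] using h1
    · -- `t` is kept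
      have hpre : ∀ p ∈ N.preset t, ¬ N.reaches x p := by
        intro p hp hq
        exact hkeep (reaches_trans hq (reaches_of_flow (flow_of_mem_preset hp)))
      have hen' : N.Enabled M' t := by
        refine ⟨hen.1, fun p hp => ?_⟩
        have := hinv p (hpre p hp)
        have := hen.2 p hp
        omega
      have hnew : ∀ p, ¬ N.reaches x p → N.fire M₀ t p + c p ≤ N.fire M' t p := by
        intro p hp
        have h1 := hinv p hp
        by_cases hpm : p ∈ N.preset t
        · have h2 := hen.2 p hpm
          simp only [fire, hpm, if_pos]
          split <;> omega
        · simp only [fire, hpm, if_neg, if_false]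
          split <;> omega
      obtain ⟨Mf', h1, h2, h3⟩ := ih (N.fire M' t) c hnew
      have hxmono : M' x ≤ N.fire M' t x := by
        have hxpre : x ∉ N.preset t := fun hq =>
          hkeep (reaches_of_flow (flow_of_mem_preset hq))
        simp only [fire, hxpre, if_neg, if_false]
        split <;> omega
      refine ⟨Mf', ?_, h2, le_trans hxmono h3⟩
      have : (t :: σ').filter (fun u => decide (¬ N.reaches x u)) =
          t :: σ'.filter (fun u => decide (¬ N.reaches x u)) := by
        simp [List.filter_cons, hkeep]
      rw [this]
      exact FireSeq.cons ⟨hen', rfl⟩ h1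

/-- Transfer of enabledness through the surgery invariant. -/
lemma enabled_transfer {x s : α} {Ma Mf' c : α → ℕ} (hen : N.Enabled Ma s)
    (hind : ∀ z ∈ N.preset s, ¬ N.reaches x z)
    (hinv : ∀ p, ¬ N.reaches x p → Ma p + c p ≤ Mf' p) : N.Enabled Mf' s := by
  refine ⟨hen.1, fun p hp => ?_⟩
  have := hinv p (hind p hp)
  have := hen.2 p hp
  omega

end PetriNet

end Aux4
section Aux5
open Classical

variable {α : Type} [DecidableEq α]

namespace WorkflowNet

variable {W : WorkflowNet α}

lemma initial_support : ∀ p, p ∉ W.places → W.initialMarking p = 0 := by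
  intro p hp
  have : p ≠ W.source := fun h => hp (h ▸ W.source_mem)
  simp [initialMarking, this]

lemma terminal_of_ne {p : α} (hp : p ≠ W.sink) : W.terminalMarking p = 0 := by
  simp [terminalMarking, hp]

lemma marked_place {M : α → ℕ} (h : W.toPetriNet.Reachable W.initialMarking M)
    {p : α} (hp : 1 ≤ M p) : p ∈ W.places :=
  PetriNet.marked_mem_places h initial_support hp

lemma post_nonempty {n : α} (hn : n ∈ W.toPetriNet.nodes) (hne : n ≠ W.sink) :
    ∃ r, r ∈ W.toPetriNet.postset n := by
  obtain ⟨w, hpath, hh, hl, hmem⟩ := W.all_on_path n hn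
  obtain ⟨w1, w2, rfl⟩ := List.append_of_mem hmem
  cases w2 with
  | nil =>
    rw [List.getLast?_append_of_ne_nil (l₁ := w1) (by simp)] at hl
    have : n = W.sink := by simpa using hl
    exact absurd this hne
  | cons r w2' =>
    have hch : List.Chain' (fun a b => (a, b) ∈ W.toPetriNet.flow) (n :: r :: w2') :=
      hpath.2.2.suffix ⟨w1, rfl⟩
    exact ⟨r, PetriNet.mem_postset_of_flow (List.isChain_cons_cons.mp hch).1⟩

lemma pre_nonempty {n : α} (hn : n ∈ W.toPetriNet.nodes) (hne : n ≠ W.source) :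
    ∃ z, z ∈ W.toPetriNet.preset n := by
  obtain ⟨w, hpath, hh, hl, hmem⟩ := W.all_on_path n hn
  obtain ⟨w1, w2, rfl⟩ := List.append_of_mem hmem
  cases w1 with
  | nil =>
    have : n = W.source := by simpa using hh
    exact absurd this hne
  | cons a w1' =>
    have hch := List.isChain_append.mp hpath.2.2
    have hlast : (a :: w1').getLast? = some ((a :: w1').getLast (by simp)) :=
      List.getLast?_eq_getLast _
    have := hch.2.2 _ hlast n (by simp)
    exact ⟨_, PetriNet.mem_preset_of_flow this⟩

/-- Extract an explicit firing sequence to the terminal marking from soundness. -/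
lemma sound_run (hsound : W.Sound) {M : α → ℕ}
    (h : W.toPetriNet.Reachable W.initialMarking M) :
    ∃ σ, W.toPetriNet.FireSeq M σ W.terminalMarking :=
  PetriNet.fireSeq_of_reachable ((hsound.1 M h).1)

lemma sink_clause (hsound : W.Sound) {M : α → ℕ}
    (h : W.toPetriNet.Reachable W.initialMarking M) (hm : 1 ≤ M W.sink) :
    M = W.terminalMarking := (hsound.1 M h).2 hm

end WorkflowNet

namespace PetriNet

variable {N : PetriNet α}

/-- The downstream cone of a node, used as termination measure. -/
noncomputable def coneCard (N : PetriNet α) (p : α) : ℕ :=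
  (N.nodes.filter fun n => N.reaches p n).card

lemma coneCard_pos {p : α} (hp : p ∈ N.nodes) : 1 ≤ N.coneCard p := by
  exact Finset.card_pos.mpr ⟨p, Finset.mem_filter.mpr ⟨hp, Relation.ReflTransGen.refl⟩⟩

lemma coneCard_lt (hacyc : N.Acyclic) {p r : α} (hpr : N.reaches p r)
    (hrp : ¬ N.reaches r p) (hp : p ∈ N.nodes) : N.coneCard r < N.coneCard p := by
  apply Finset.card_lt_card
  constructor
  · intro n hn
    simp only [Finset.mem_filter] at hn ⊢
    exact ⟨hn.1, reaches_trans hpr hn.2⟩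
  · intro hsub
    have : p ∈ N.nodes.filter fun n => N.reaches r n :=
      hsub (Finset.mem_filter.mpr ⟨hp, Relation.ReflTransGen.refl⟩)
    simp only [Finset.mem_filter] at this
    exact hrp this.2

/-- Free choice: two distinct output transitions of a place force singleton presets. -/
lemma fc_preset_singleton (hfc : N.FreeChoice) {p t u : α} (hp : p ∈ N.places)
    (ht : t ∈ N.postset p) (hu : u ∈ N.postset p) (hne : u ≠ t) :
    N.preset t = {p} := by
  refine hfc p hp ?_ t ht
  exact Finset.one_lt_card.mpr ⟨u, hu, t, ht, hne⟩

lemma enabled_of_preset_singleton {M : α → ℕ} {t p : α} (ht : t ∈ N.transitions)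
    (hpre : N.preset t = {p}) (hM : 1 ≤ M p) : N.Enabled M t := by
  refine ⟨ht, fun z hz => ?_⟩
  rw [hpre] at hz
  simp only [Finset.mem_singleton] at hz
  exact hz ▸ hM

end PetriNet

end Aux5
section Aux6
open Classical

variable {α : Type} [DecidableEq α]

namespace WorkflowNet

variable {W : WorkflowNet α}

open PetriNet Relation

/-- Central invariant of sound acyclic free-choice workflow nets: no reachable marking
marks two distinct places connected by a path, nor marks any place twice. -/
lemma noBad (hfc : W.toPetriNet.FreeChoice) (hacyc : W.toPetriNet.Acyclic)
    (hsound : W.Sound) :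
    ∀ k (M : α → ℕ) (p q : α), W.toPetriNet.Reachable W.initialMarking M →
      1 ≤ M p → 1 ≤ M q →
      ((p ≠ q ∧ W.toPetriNet.reaches p q ∧ 2 * W.toPetriNet.coneCard p ≤ k) ∨
       (p = q ∧ 2 ≤ M p ∧ 2 * W.toPetriNet.coneCard p + 1 ≤ k)) → False := by
  intro k
  induction k using Nat.strong_induction_on with
  | _ k IH =>
  intro M p q hreach hMp hMq hcase
  have hpplace : p ∈ W.places := marked_place hreach hMp
  have hpnode : p ∈ W.toPetriNet.nodes := by
    simp [PetriNet.nodes, hpplace]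
  have hconepos := coneCard_pos (N := W.toPetriNet) hpnode
  rcases hcase with ⟨hne, hpq, hk⟩ | ⟨rfl, hM2, hk⟩
  · -- two distinct causally ordered tokens
    have hqplace : q ∈ W.places := marked_place hreach hMq
    by_cases hqsink : q = W.sink
    · subst hqsink
      have hterm := sink_clause hsound hreach hMq
      rw [hterm] at hMp
      rw [terminal_of_ne hne] at hMp
      omega
    · rcases Relation.ReflTransGen.cases_head hpq with rfl | ⟨t1, hpt1, ht1q⟩
      · exact hne rfl
      · have ht1trans : t1 ∈ W.transitions := trans_of_flow_place hpt1 hpplace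
        have ht1post : t1 ∈ W.toPetriNet.postset p := mem_postset_of_flow hpt1
        have ht1q_ne : t1 ≠ q := fun h => not_place_trans (h ▸ hqplace) ht1trans
        have hnqt1 : ¬ W.toPetriNet.reaches q t1 := fun h =>
          ht1q_ne (reaches_antisymm hacyc ht1q h)
        have key : ∃ Ma, W.toPetriNet.Reachable W.initialMarking Ma ∧
            W.toPetriNet.Enabled Ma t1 ∧ 1 ≤ Ma q := by
          by_cases hex : ∃ u ∈ W.toPetriNet.postset p, u ≠ t1
          · obtain ⟨u, hu, hune⟩ := hex
            exact ⟨M, hreach, enabled_of_preset_singleton ht1trans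
              (fc_preset_singleton hfc hpplace ht1post hu hune) hMp, hMq⟩
          · push_neg at hex
            have hpsink : p ≠ W.sink := by
              intro h
              rw [h] at ht1post
              rw [W.sink_no_post] at ht1post
              exact absurd ht1post (Finset.notMem_empty _)
            obtain ⟨σ, hσ⟩ := sound_run hsound hreach
            have hterm0 : W.terminalMarking p = 0 := terminal_of_ne hpsink
            obtain ⟨σa, u, σb, rfl, hnoc, hupre⟩ :=
              exists_first_consumer hσ (by rw [hterm0]; omega)
            have hu : u ∈ W.toPetriNet.postset p :=
              mem_postset_of_flow (flow_of_mem_preset hupre)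
            have hut : u = t1 := hex u hu
            obtain ⟨Ma0, h1, h2⟩ := fireSeq_append_split hσ
            have hstep : W.toPetriNet.Enabled Ma0 t1 := by
              rcases h2 with _ | ⟨hs, _⟩
              exact hut ▸ hs.1
            obtain ⟨Md, hfsd, hinvd, hqd⟩ :=
              surgery (x := q) h1 M (fun _ => 0) (by intro r _; simp)
            refine ⟨Md, Relation.ReflTransGen.trans hreach (reachable_of_fireSeq hfsd),
              ?_, by omega⟩
            refine enabled_transfer hstep ?_ hinvd
            intro z hz hqz
            exact hnqt1 (Relation.ReflTransGen.tail hqz (flow_of_mem_preset hz))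
        obtain ⟨Ma, hMa_reach, hMa_en, hMaq⟩ := key
        have hstep : W.toPetriNet.Step Ma t1 (W.toPetriNet.fire Ma t1) := ⟨hMa_en, rfl⟩
        have hreach₁ : W.toPetriNet.Reachable W.initialMarking (W.toPetriNet.fire Ma t1) :=
          Relation.ReflTransGen.tail hMa_reach ⟨t1, hstep⟩
        have hqpre : q ∉ W.toPetriNet.preset t1 := fun hq' =>
          hnqt1 (reaches_of_flow (flow_of_mem_preset hq'))
        have hM₁q : 1 ≤ W.toPetriNet.fire Ma t1 q := by
          simp only [PetriNet.fire, hqpre, if_neg, if_false]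
          split <;> omega
        rcases Relation.ReflTransGen.cases_head ht1q with rfl | ⟨r1, ht1r1, hr1q⟩
        · exact ht1q_ne rfl
        · have hr1post : r1 ∈ W.toPetriNet.postset t1 := mem_postset_of_flow ht1r1
          have hr1pre : r1 ∉ W.toPetriNet.preset t1 := fun hq' =>
            no_flow_cycle hacyc (flow_of_mem_preset hq') (reaches_of_flow ht1r1)
          have hM₁r1 : 1 ≤ W.toPetriNet.fire Ma t1 r1 := by
            simp only [PetriNet.fire, hr1pre, hr1post, if_neg, if_pos, if_false]
            omega
          have hnqp : ¬ W.toPetriNet.reaches q p := fun h =>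
            hne (reaches_antisymm hacyc hpq h)
          have hconeq : W.toPetriNet.coneCard q < W.toPetriNet.coneCard p :=
            coneCard_lt hacyc hpq hnqp hpnode
          by_cases hr1 : r1 = q
          · subst hr1
            have hM₁q2 : 2 ≤ W.toPetriNet.fire Ma t1 r1 := by
              simp only [PetriNet.fire, hr1pre, hr1post, if_neg, if_pos, if_false]
              omega
            exact IH (k - 1) (by omega) _ r1 r1 hreach₁ hM₁q hM₁q
              (Or.inr ⟨rfl, hM₁q2, by omega⟩)
          · have hp_r1 : p ≠ r1 := fun h =>
              no_flow_cycle hacyc hpt1 (reaches_of_flow (h ▸ ht1r1))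
            have hpr1 : W.toPetriNet.reaches p r1 :=
              Relation.ReflTransGen.head hpt1 (Relation.ReflTransGen.single ht1r1)
            have hnr1p : ¬ W.toPetriNet.reaches r1 p := fun h =>
              hp_r1 (reaches_antisymm hacyc hpr1 h)
            have hcone : W.toPetriNet.coneCard r1 < W.toPetriNet.coneCard p :=
              coneCard_lt hacyc hpr1 hnr1p hpnode
            exact IH (k - 1) (by omega) _ r1 q hreach₁ hM₁r1 hM₁q
              (Or.inl ⟨hr1, hr1q, by omega⟩)
  · -- a doubly marked place
    by_cases hsink : p = W.sink
    · subst hsink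
      have hterm := sink_clause hsound hreach (by omega)
      rw [hterm] at hM2
      simp [terminalMarking] at hM2
    · obtain ⟨t, ht⟩ := post_nonempty hpnode hsink
      have htflow : (p, t) ∈ W.flow := flow_of_mem_postset ht
      have httrans : t ∈ W.transitions := trans_of_flow_place htflow hpplace
      have key : ∃ Ma, W.toPetriNet.Reachable W.initialMarking Ma ∧
          W.toPetriNet.Enabled Ma t ∧ 2 ≤ Ma p := by
        by_cases hex : ∃ u ∈ W.toPetriNet.postset p, u ≠ t
        · obtain ⟨u, hu, hune⟩ := hex
          exact ⟨M, hreach, enabled_of_preset_singleton httrans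
            (fc_preset_singleton hfc hpplace ht hu hune) hMp, hM2⟩
        · push_neg at hex
          obtain ⟨σ, hσ⟩ := sound_run hsound hreach
          have hterm0 : W.terminalMarking p = 0 := terminal_of_ne hsink
          obtain ⟨σa, u, σb, rfl, hnoc, hupre⟩ :=
            exists_first_consumer hσ (by rw [hterm0]; omega)
          have hu : u ∈ W.toPetriNet.postset p :=
            mem_postset_of_flow (flow_of_mem_preset hupre)
          have hut : u = t := hex u hu
          obtain ⟨Ma0, h1, h2⟩ := fireSeq_append_split hσ
          have hstep : W.toPetriNet.Enabled Ma0 t := by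
            rcases h2 with _ | ⟨hs, _⟩
            exact hut ▸ hs.1
          exact ⟨Ma0, Relation.ReflTransGen.trans hreach (reachable_of_fireSeq h1),
            hstep, le_trans hM2 (no_consumer_mono h1 hnoc)⟩
      obtain ⟨Ma, hMa_reach, hMa_en, hMa2⟩ := key
      have hstep : W.toPetriNet.Step Ma t (W.toPetriNet.fire Ma t) := ⟨hMa_en, rfl⟩
      have hreach₁ : W.toPetriNet.Reachable W.initialMarking (W.toPetriNet.fire Ma t) :=
        Relation.ReflTransGen.tail hMa_reach ⟨t, hstep⟩
      have hppost : p ∉ W.toPetriNet.postset t := fun hq =>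
        no_flow_cycle hacyc htflow (reaches_of_flow (flow_of_mem_postset hq))
      have hppre : p ∈ W.toPetriNet.preset t := mem_preset_of_flow htflow
      have hM₁p : 1 ≤ W.toPetriNet.fire Ma t p := by
        simp only [PetriNet.fire, hppost, hppre, if_pos, if_neg, if_false]
        omega
      have htnode : t ∈ W.toPetriNet.nodes := by
        simp [PetriNet.nodes, httrans]
      have htsink : t ≠ W.sink := fun h => not_place_trans (h ▸ W.sink_mem) httrans
      obtain ⟨r, hr⟩ := post_nonempty htnode htsink
      have hrflow : (t, r) ∈ W.flow := flow_of_mem_postset hr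
      have hrpre : r ∉ W.toPetriNet.preset t := fun hq =>
        no_flow_cycle hacyc (flow_of_mem_preset hq) (reaches_of_flow hrflow)
      have hM₁r : 1 ≤ W.toPetriNet.fire Ma t r := by
        simp only [PetriNet.fire, hrpre, hr, if_neg, if_pos, if_false]
        omega
      have hrp : p ≠ r := fun h => hppost (h ▸ hr)
      have hreaches : W.toPetriNet.reaches p r :=
        Relation.ReflTransGen.head htflow (Relation.ReflTransGen.single hrflow)
      exact IH (k - 1) (by omega) _ p r hreach₁ hM₁p hM₁r
        (Or.inl ⟨hrp, hreaches, by omega⟩)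

end WorkflowNet

end Aux6
section Aux7
open Classical

variable {α : Type} [DecidableEq α]

namespace PetriNet

variable {N : PetriNet α} {M₀ : α → ℕ}

lemma concStep_mono {R S : Set (α × α)} (h : R ⊆ S) :
    N.concStep M₀ R ⊆ N.concStep M₀ S := by
  intro q hq
  obtain ⟨h1, h2, h3, h4, h5⟩ := hq
  exact ⟨h1, h2, fun a b z hz => h (h3 a b z hz), fun a b z hz => h (h4 a b z hz),
    fun a b z hz z' hz' => h (h5 a b z hz z' hz')⟩

lemma conc_postfixed {q : α × α} (hq : q ∈ N.Concurrent M₀) :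
    q ∈ N.concStep M₀ (N.Concurrent M₀) := by
  obtain ⟨R, hR, hqR⟩ := hq
  exact concStep_mono (fun p hp => Set.mem_sUnion.mpr ⟨R, hR, hp⟩) (hR hqR)

lemma conc_of_postfixed {R : Set (α × α)} (hR : R ⊆ N.concStep M₀ R) {q : α × α}
    (hq : q ∈ R) : q ∈ N.Concurrent M₀ := Set.mem_sUnion.mpr ⟨R, hR, hq⟩

lemma conc_ne {a b : α} (h : (a, b) ∈ N.Concurrent M₀) : a ≠ b := (conc_postfixed h).1

lemma conc_coactive {a b : α} (h : (a, b) ∈ N.Concurrent M₀) :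
    ∃ M, N.Reachable M₀ M ∧ N.Active a M ∧ N.Active b M := (conc_postfixed h).2.1

lemma conc_clause_tp {a b : α} (h : (a, b) ∈ N.Concurrent M₀) (ha : a ∈ N.transitions)
    (hb : b ∈ N.places) : ∀ z ∈ N.preset a, (z, b) ∈ N.Concurrent M₀ :=
  (conc_postfixed h).2.2.1 ha hb

lemma conc_clause_pt {a b : α} (h : (a, b) ∈ N.Concurrent M₀) (ha : a ∈ N.places)
    (hb : b ∈ N.transitions) : ∀ z ∈ N.preset b, (z, a) ∈ N.Concurrent M₀ :=
  (conc_postfixed h).2.2.2.1 ha hb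

lemma conc_clause_tt {a b : α} (h : (a, b) ∈ N.Concurrent M₀) (ha : a ∈ N.transitions)
    (hb : b ∈ N.transitions) :
    ∀ z ∈ N.preset a, ∀ z' ∈ N.preset b, (z, z') ∈ N.Concurrent M₀ :=
  (conc_postfixed h).2.2.2.2 ha hb

lemma conc_symm {a b : α} (h : (a, b) ∈ N.Concurrent M₀) : (b, a) ∈ N.Concurrent M₀ := by
  obtain ⟨R, hR, hab⟩ := h
  refine conc_of_postfixed (R := R ∪ {q | (q.2, q.1) ∈ R}) ?_ (Or.inr hab)
  rintro ⟨u, v⟩ (huv | huv)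
  · exact concStep_mono Set.subset_union_left (hR huv)
  · obtain ⟨h1, ⟨M, hM, hu, hv⟩, h3, h4, h5⟩ := hR huv
    refine ⟨h1.symm, ⟨M, hM, hv, hu⟩, ?_, ?_, ?_⟩
    · intro hu' hv' z hz
      exact Or.inl (h4 hv' hu' z hz)
    · intro hu' hv' z hz
      exact Or.inl (h3 hv' hu' z hz)
    · intro hu' hv' z hz z' hz'
      exact Or.inr (h5 hv' hu' z' hz' z hz)

lemma active_place {M : α → ℕ} {x : α} (h : N.Active x M) (hx : x ∈ N.places) :
    1 ≤ M x := by
  rcases h with ⟨_, h⟩ | ⟨hx', _⟩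
  · exact h
  · exact absurd hx (fun q => not_place_trans q hx')

lemma active_trans {M : α → ℕ} {x : α} (h : N.Active x M) (hx : x ∈ N.transitions) :
    N.Enabled M x := by
  rcases h with ⟨hx', _⟩ | ⟨_, h⟩
  · exact absurd hx' (fun q => not_place_trans q hx)
  · exact h

lemma active_node {M : α → ℕ} {x : α} (h : N.Active x M) : x ∈ N.nodes := by
  rcases h with ⟨hx, _⟩ | ⟨hx, _⟩ <;> simp [nodes, hx]

/-- Introduction rule for the concurrency relation from a co-activating marking. -/
lemma conc_intro {M : α → ℕ} {x s : α} (hM : N.Reachable M₀ M) (hx : N.Active x M)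
    (hs : N.Active s M) (hne : x ≠ s)
    (h1 : x ∈ N.transitions → s ∈ N.places → ∀ z ∈ N.preset x, z ≠ s)
    (h2 : x ∈ N.places → s ∈ N.transitions → ∀ z ∈ N.preset s, z ≠ x)
    (h3 : x ∈ N.transitions → s ∈ N.transitions →
      ∀ z ∈ N.preset x, ∀ z' ∈ N.preset s, z ≠ z') :
    (x, s) ∈ N.Concurrent M₀ := by
  classical
  set R : Set (α × α) := N.Concurrent M₀ ∪ {(x, s)} ∪
      {q | x ∈ N.transitions ∧ s ∈ N.places ∧ q.1 ∈ N.preset x ∧ q.2 = s} ∪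
      {q | x ∈ N.places ∧ s ∈ N.transitions ∧ q.1 ∈ N.preset s ∧ q.2 = x} ∪
      {q | x ∈ N.transitions ∧ s ∈ N.transitions ∧ q.1 ∈ N.preset x ∧ q.2 ∈ N.preset s}
      with hRdef
  have hmarked_pre : ∀ t ∈ N.transitions, N.Active t M → ∀ z ∈ N.preset t,
      z ∈ N.places ∧ 1 ≤ M z := by
    intro t ht hact z hz
    exact ⟨place_of_flow_into_trans (flow_of_mem_preset hz) ht,
      (active_trans hact ht).2 z hz⟩
  refine conc_of_postfixed (R := R) ?_ (by simp [hRdef])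
  rintro ⟨u, v⟩ hq
  simp only [hRdef, Set.mem_union, Set.mem_singleton_iff, Set.mem_setOf_eq, Prod.mk.injEq] at hq
  rcases hq with ((((huv | ⟨rfl, rfl⟩) | ⟨hxT, hsP, hu, rfl⟩) | ⟨hxP, hsT, hu, rfl⟩) |
    ⟨hxT, hsT, hu, hv⟩)
  · refine concStep_mono ?_ (conc_postfixed huv)
    intro p hp
    simp [hRdef, hp]
  · -- the pair (x, s) itself
    refine ⟨hne, ⟨M, hM, hx, hs⟩, ?_, ?_, ?_⟩
    · intro hxT hsP z hz
      simp [hRdef, hxT, hsP, hz]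
    · intro hxP hsT z hz
      simp [hRdef, hxP, hsT, hz]
    · intro hxT hsT z hz z' hz'
      simp [hRdef, hxT, hsT, hz, hz']
  · -- pairs (z, s) with z ∈ •x, for x transition and s place
    obtain ⟨huP, huM⟩ := hmarked_pre x hxT hx u hu
    refine ⟨h1 hxT hsP u hu, ⟨M, hM, Or.inl ⟨huP, huM⟩, hs⟩, ?_, ?_, ?_⟩
    · intro huT _; exact absurd huP (fun q => not_place_trans q huT)
    · intro _ hsT; exact absurd hsP (fun q => not_place_trans q hsT)
    · intro huT _; exact absurd huP (fun q => not_place_trans q huT)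
  · -- pairs (z, x) with z ∈ •s, for x place and s transition
    obtain ⟨huP, huM⟩ := hmarked_pre s hsT hs u hu
    refine ⟨h2 hxP hsT u hu, ⟨M, hM, Or.inl ⟨huP, huM⟩, hx⟩, ?_, ?_, ?_⟩
    · intro huT _; exact absurd huP (fun q => not_place_trans q huT)
    · intro _ hxT; exact absurd hxP (fun q => not_place_trans q hxT)
    · intro huT _; exact absurd huP (fun q => not_place_trans q huT)
  · -- pairs (z, z') with z ∈ •x, z' ∈ •s, both transitions
    obtain ⟨huP, huM⟩ := hmarked_pre x hxT hx u hu
    obtain ⟨hvP, hvM⟩ := hmarked_pre s hsT hs v hv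
    refine ⟨h3 hxT hsT u hu v hv, ⟨M, hM, Or.inl ⟨huP, huM⟩, Or.inl ⟨hvP, hvM⟩⟩, ?_, ?_, ?_⟩
    · intro huT _; exact absurd huP (fun q => not_place_trans q huT)
    · intro huT' hvT; exact absurd hvP (fun q => not_place_trans q hvT)
    · intro huT _; exact absurd huP (fun q => not_place_trans q huT)

end PetriNet

end Aux7
section Aux8
open Classical

variable {α : Type} [DecidableEq α]

namespace WorkflowNet

open PetriNet

variable {W : WorkflowNet α}

lemma noPathMarked (hfc : W.toPetriNet.FreeChoice) (hacyc : W.toPetriNet.Acyclic)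
    (hsound : W.Sound) {M : α → ℕ} {p q : α}
    (hreach : W.toPetriNet.Reachable W.initialMarking M) (hp : 1 ≤ M p) (hq : 1 ≤ M q)
    (hne : p ≠ q) (hr : W.toPetriNet.reaches p q) : False :=
  noBad hfc hacyc hsound (2 * W.toPetriNet.coneCard p) M p q hreach hp hq
    (Or.inl ⟨hne, hr, le_refl _⟩)

/-- Concurrent nodes are never connected by a path. -/
lemma conc_not_reaches (hfc : W.toPetriNet.FreeChoice) (hacyc : W.toPetriNet.Acyclic)
    (hsound : W.Sound) {a b : α}
    (h : (a, b) ∈ W.toPetriNet.Concurrent W.initialMarking)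
    (hr : W.toPetriNet.reaches a b) : False := by
  have hne := conc_ne h
  obtain ⟨M, hreach, hactA, hactB⟩ := conc_coactive h
  rcases Finset.mem_union.mp (active_node hactA) with haP | haT
  · rcases Finset.mem_union.mp (active_node hactB) with hbP | hbT
    · exact noPathMarked hfc hacyc hsound hreach (active_place hactA haP)
        (active_place hactB hbP) hne hr
    · rcases Relation.ReflTransGen.cases_tail hr with heq | ⟨w, haw, hwb⟩
      · exact hne heq.symm
      · have hwpre : w ∈ W.toPetriNet.preset b := mem_preset_of_flow hwb
        have hconc := conc_clause_pt h haP hbT w hwpre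
        obtain ⟨M', hreach', hactw, hacta'⟩ := conc_coactive hconc
        have hwP : w ∈ W.places := place_of_flow_into_trans hwb hbT
        exact noPathMarked hfc hacyc hsound hreach' (active_place hacta' haP)
          (active_place hactw hwP) (conc_ne hconc).symm haw
  · have hasrc : a ≠ W.source := fun h' => not_place_trans (h' ▸ W.source_mem) haT
    obtain ⟨z, hz⟩ := pre_nonempty (active_node hactA) hasrc
    have hzflow := flow_of_mem_preset hz
    have hzP : z ∈ W.places := place_of_flow_into_trans hzflow haT
    rcases Finset.mem_union.mp (active_node hactB) with hbP | hbT
    · have hconc := conc_clause_tp h haT hbP z hz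
      obtain ⟨M', hreach', hactz, hactb'⟩ := conc_coactive hconc
      exact noPathMarked hfc hacyc hsound hreach' (active_place hactz hzP)
        (active_place hactb' hbP) (conc_ne hconc)
        (Relation.ReflTransGen.head hzflow hr)
    · rcases Relation.ReflTransGen.cases_tail hr with heq | ⟨w, haw, hwb⟩
      · exact hne heq.symm
      · have hwpre := mem_preset_of_flow hwb
        have hwP : w ∈ W.places := place_of_flow_into_trans hwb hbT
        have hconc := conc_clause_tt h haT hbT z hz w hwpre
        obtain ⟨M', hreach', hactz, hactw⟩ := conc_coactive hconc
        exact noPathMarked hfc hacyc hsound hreach' (active_place hactz hzP)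
          (active_place hactw hwP) (conc_ne hconc)
          (Relation.ReflTransGen.head hzflow haw)

/-- The detour construction: if `x` is active together with a marked place `y` whose
unique output transition is `s`, and there is no path from `x` to `s`, then some
reachable marking activates `x` and enables `s` simultaneously. -/
lemma detour (hacyc : W.toPetriNet.Acyclic) (hsound : W.Sound) {M₀ : α → ℕ} {x y s : α}
    (hreach : W.toPetriNet.Reachable W.initialMarking M₀) (hx : W.toPetriNet.Active x M₀)
    (hyP : y ∈ W.places) (hyM : 1 ≤ M₀ y) (hynx : y ∉ W.toPetriNet.preset x)
    (hs : s ∈ W.toPetriNet.postset y) (hyonly : ∀ u ∈ W.toPetriNet.postset y, u = s)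
    (hnreach : ¬ W.toPetriNet.reaches x s) :
    ∃ Mf, W.toPetriNet.Reachable W.initialMarking Mf ∧ W.toPetriNet.Active x Mf ∧
      W.toPetriNet.Enabled Mf s := by
  have hsflow : (y, s) ∈ W.flow := flow_of_mem_postset hs
  have hsT : s ∈ W.transitions := trans_of_flow_place hsflow hyP
  have hysink : y ≠ W.sink := by
    intro h
    rw [h, W.sink_no_post] at hs
    exact absurd hs (Finset.notMem_empty _)
  have htermy : W.terminalMarking y = 0 := terminal_of_ne hysink
  have hind : ∀ z ∈ W.toPetriNet.preset s, ¬ W.toPetriNet.reaches x z := by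
    intro z hz hq
    exact hnreach (Relation.ReflTransGen.tail hq (flow_of_mem_preset hz))
  rcases Finset.mem_union.mp (active_node hx) with hxP | hxT
  · -- x is a place
    obtain ⟨τ, hτ⟩ := sound_run hsound hreach
    obtain ⟨τa, u, τb, rfl, hnoc, hupre⟩ :=
      exists_first_consumer hτ (by rw [htermy]; omega)
    have hu : u = s := hyonly u (mem_postset_of_flow (flow_of_mem_preset hupre))
    obtain ⟨Ma, h1, h2⟩ := fireSeq_append_split hτ
    have hen_s : W.toPetriNet.Enabled Ma s := by
      rcases h2 with _ | ⟨hs', _⟩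
      exact hu ▸ hs'.1
    obtain ⟨Md, hfsd, hinvd, hxd⟩ :=
      surgery (x := x) h1 M₀ (fun _ => 0) (by intro r _; simp)
    have hxm := active_place hx hxP
    refine ⟨Md, Relation.ReflTransGen.trans hreach (reachable_of_fireSeq hfsd),
      Or.inl ⟨hxP, by omega⟩, enabled_transfer hen_s hind hinvd⟩
  · -- x is a transition
    have hen_x : W.toPetriNet.Enabled M₀ x := active_trans hx hxT
    have hstep : W.toPetriNet.Step M₀ x (W.toPetriNet.fire M₀ x) := ⟨hen_x, rfl⟩
    have hreach1 : W.toPetriNet.Reachable W.initialMarking (W.toPetriNet.fire M₀ x) :=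
      Relation.ReflTransGen.tail hreach ⟨x, hstep⟩
    have hN1y : 1 ≤ W.toPetriNet.fire M₀ x y := by
      simp only [PetriNet.fire, hynx, if_neg, if_false]
      split <;> omega
    obtain ⟨τ, hτ⟩ := sound_run hsound hreach1
    obtain ⟨τa, u, τb, rfl, hnoc, hupre⟩ :=
      exists_first_consumer hτ (by rw [htermy]; omega)
    have hu : u = s := hyonly u (mem_postset_of_flow (flow_of_mem_preset hupre))
    obtain ⟨Ma, h1, h2⟩ := fireSeq_append_split hτ
    have hen_s : W.toPetriNet.Enabled Ma s := by
      rcases h2 with _ | ⟨hs', _⟩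
      exact hu ▸ hs'.1
    have hinv : ∀ p, ¬ W.toPetriNet.reaches x p →
        W.toPetriNet.fire M₀ x p + (if p ∈ W.toPetriNet.preset x then 1 else 0) ≤ M₀ p := by
      intro p hp
      have hpost : p ∉ W.toPetriNet.postset x := fun hq =>
        hp (reaches_of_flow (flow_of_mem_postset hq))
      by_cases hpre : p ∈ W.toPetriNet.preset x
      · have := hen_x.2 p hpre
        simp only [PetriNet.fire, hpre, hpost, if_pos, if_neg, if_false]
        omega
      · simp only [PetriNet.fire, hpre, hpost, if_neg, if_false]
        omega
    obtain ⟨Md, hfsd, hinvd, _⟩ :=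
      surgery (x := x) h1 M₀ (fun p => if p ∈ W.toPetriNet.preset x then 1 else 0) hinv
    refine ⟨Md, Relation.ReflTransGen.trans hreach (reachable_of_fireSeq hfsd),
      Or.inr ⟨hxT, hxT, ?_⟩, enabled_transfer hen_s hind hinvd⟩
    intro z hz
    have hnz : ¬ W.toPetriNet.reaches x z := fun hq =>
      no_flow_cycle hacyc (flow_of_mem_preset hz) hq
    have := hinvd z hnz
    rw [if_pos hz] at this
    omega

end WorkflowNet

end Aux8
/-- In a sound acyclic free-choice workflow net: for every concurrent pair `(x,y)` and
every node `s ∈ y•`, there is no acyclic path from `x` to `s` iff `x` and `s`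
are concurrent. -/
theorem postset_no_path_iff_concurrent {α : Type} [DecidableEq α] (W : WorkflowNet α)
    (hfc : W.toPetriNet.FreeChoice) (hacyc : W.toPetriNet.Acyclic) (hsound : W.Sound) :
    ∀ x y : α, (x, y) ∈ W.toPetriNet.Concurrent W.initialMarking →
      ∀ s ∈ W.toPetriNet.postset y,
        (¬ W.toPetriNet.HasAcyclicPath x s ↔
          (x, s) ∈ W.toPetriNet.Concurrent W.initialMarking) := by
  intro x y hxy s hs
  have hysflow : (y, s) ∈ W.flow := PetriNet.flow_of_mem_postset hs
  constructor
  · intro hnp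
    obtain ⟨M₀, hreach₀, hactx, hacty⟩ := PetriNet.conc_coactive hxy
    have hxnode := PetriNet.active_node hactx
    have hxs : x ≠ s := by
      rintro rfl
      exact hnp (PetriNet.hasAcyclicPath_refl hxnode)
    have hnreach : ¬ W.toPetriNet.reaches x s := fun h =>
      hnp (PetriNet.hasAcyclicPath_of_reaches h hxnode)
    rcases Finset.mem_union.mp (PetriNet.active_node hacty) with hyP | hyT
    · -- `y` is a place, `s` a transition
      have hsT : s ∈ W.transitions := PetriNet.trans_of_flow_place hysflow hyP
      have hyM : 1 ≤ M₀ y := PetriNet.active_place hacty hyP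
      have hMstar : ∃ Mf, W.toPetriNet.Reachable W.initialMarking Mf ∧
          W.toPetriNet.Active x Mf ∧ W.toPetriNet.Active s Mf := by
        by_cases hps : W.toPetriNet.preset s = {y}
        · exact ⟨M₀, hreach₀, hactx,
            Or.inr ⟨hsT, PetriNet.enabled_of_preset_singleton hsT hps hyM⟩⟩
        · have hyonly : ∀ u ∈ W.toPetriNet.postset y, u = s := by
            intro u hu
            by_contra hne
            exact hps (PetriNet.fc_preset_singleton hfc hyP hs hu hne)
          have hynx : y ∉ W.toPetriNet.preset x := by
            intro hyx
            have hxT : x ∈ W.transitions :=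
              PetriNet.trans_of_flow_place (PetriNet.flow_of_mem_preset hyx) hyP
            exact PetriNet.conc_ne (PetriNet.conc_clause_tp hxy hxT hyP y hyx) rfl
          obtain ⟨Mf, h1, h2, h3⟩ :=
            WorkflowNet.detour hacyc hsound hreach₀ hactx hyP hyM hynx hs hyonly hnreach
          exact ⟨Mf, h1, h2, Or.inr ⟨hsT, h3⟩⟩
      obtain ⟨Mf, hreachf, hactxf, hactsf⟩ := hMstar
      refine PetriNet.conc_intro hreachf hactxf hactsf hxs ?_ ?_ ?_
      · intro _ hsP
        exact (PetriNet.not_place_trans hsP hsT).elim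
      · intro _ _ z hz hzx
        exact hnreach (PetriNet.reaches_of_flow
          (hzx ▸ PetriNet.flow_of_mem_preset hz))
      · intro hxT _ z hz z' hz' heq
        have hzP : z ∈ W.places :=
          PetriNet.place_of_flow_into_trans (PetriNet.flow_of_mem_preset hz) hxT
        have hxpost : x ∈ W.toPetriNet.postset z :=
          PetriNet.mem_postset_of_flow (PetriNet.flow_of_mem_preset hz)
        have hspost : s ∈ W.toPetriNet.postset z :=
          PetriNet.mem_postset_of_flow (PetriNet.flow_of_mem_preset (heq ▸ hz'))
        have hpre := PetriNet.fc_preset_singleton hfc hzP hspost hxpost hxs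
        have hy_in : y ∈ W.toPetriNet.preset s := PetriNet.mem_preset_of_flow hysflow
        rw [hpre] at hy_in
        have hyz : y = z := by simpa using hy_in
        have hyx : y ∈ W.toPetriNet.preset x := hyz ▸ hz
        exact PetriNet.conc_ne (PetriNet.conc_clause_tp hxy hxT hyP y hyx) rfl
    · -- `y` is a transition, `s` a place
      have hyEn : W.toPetriNet.Enabled M₀ y := PetriNet.active_trans hacty hyT
      have hsP : s ∈ W.places := PetriNet.place_of_flow_trans hysflow hyT
      have hstep : W.toPetriNet.Step M₀ y (W.toPetriNet.fire M₀ y) := ⟨hyEn, rfl⟩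
      have hreach₁ : W.toPetriNet.Reachable W.initialMarking (W.toPetriNet.fire M₀ y) :=
        Relation.ReflTransGen.tail hreach₀ ⟨y, hstep⟩
      have hspre : s ∉ W.toPetriNet.preset y := fun hq =>
        PetriNet.no_flow_cycle hacyc hysflow
          (PetriNet.reaches_of_flow (PetriNet.flow_of_mem_preset hq))
      have hM₁s : 1 ≤ W.toPetriNet.fire M₀ y s := by
        simp only [PetriNet.fire, hspre, hs, if_neg, if_pos, if_false]
        omega
      have hactsf : W.toPetriNet.Active s (W.toPetriNet.fire M₀ y) := Or.inl ⟨hsP, hM₁s⟩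
      have hactxf : W.toPetriNet.Active x (W.toPetriNet.fire M₀ y) := by
        rcases Finset.mem_union.mp hxnode with hxP | hxT
        · have hxny : x ∉ W.toPetriNet.preset y := fun hq =>
            PetriNet.conc_ne (PetriNet.conc_clause_pt hxy hxP hyT x hq) rfl
          refine Or.inl ⟨hxP, ?_⟩
          have := PetriNet.active_place hactx hxP
          simp only [PetriNet.fire, hxny, if_neg, if_false]
          split <;> omega
        · have hdisj := PetriNet.conc_clause_tt hxy hxT hyT
          refine Or.inr ⟨hxT, hxT, ?_⟩
          intro z hz
          have hzny : z ∉ W.toPetriNet.preset y := fun hq =>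
            PetriNet.conc_ne (hdisj z hz z hq) rfl
          have := (PetriNet.active_trans hactx hxT).2 z hz
          simp only [PetriNet.fire, hzny, if_neg, if_false]
          split <;> omega
      refine PetriNet.conc_intro hreach₁ hactxf hactsf hxs ?_ ?_ ?_
      · intro _ _ z hz hzs
        have hsx : (s, x) ∈ W.flow := hzs ▸ PetriNet.flow_of_mem_preset hz
        exact (WorkflowNet.conc_not_reaches hfc hacyc hsound (PetriNet.conc_symm hxy)
          (Relation.ReflTransGen.head hysflow (Relation.ReflTransGen.single hsx))).elim
      · intro _ hsT
        exact (PetriNet.not_place_trans hsP hsT).elim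
      · intro _ hsT
        exact (PetriNet.not_place_trans hsP hsT).elim
  · intro hconc hpath
    exact WorkflowNet.conc_not_reaches hfc hacyc hsound hconc
      (PetriNet.reaches_of_hasAcyclicPath hpath)
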